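/- arXiv:1810.13070 — 4 statements merged into one kernel-verified Lean document; each statement's English description precedes it below -/
import Mathlib

section
/- Let n ≥ 1 be a natural number, let y be a nonzero real number and x a real number, and let g be the 2×2 real matrix with rows (y, x) and (0, 1). Then there exist matrices k₁, k₂ in SO(2) (real 2×2 matrices k with kᵀk = 1 and det k = 1) and nonzero real numbers d₁, d₂ with n⁻¹ ≤ |d₁/d₂| ≤ n such that g = k₁ · diag(d₁, d₂) · k₂, if and only if x²/|y| + |y| + |y|⁻¹ ≤ n + n⁻¹. -/
open Matrix

private lemma aux_arg (A B : ℝ) :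
    Real.sin ((A:ℂ) - B*Complex.I).arg * A + Real.cos ((A:ℂ) - B*Complex.I).arg * B = 0 := by
  rcases eq_or_ne ((A:ℂ) - B*Complex.I) 0 with h | h
  · have hA : A = 0 := by have := congrArg Complex.re h; simpa using this
    have hB : B = 0 := by have := congrArg Complex.im h; simpa using this
    simp [hA, hB]
  · rw [Complex.sin_arg, Complex.cos_arg h]
    have habs : ‖((A:ℂ) - B*Complex.I)‖ ≠ 0 := norm_ne_zero_iff.mpr h
    have h1 : ((A:ℂ) - B*Complex.I).im = -B := by simp
    have h2 : ((A:ℂ) - B*Complex.I).re = A := by simp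
    rw [h1, h2]; field_simp; ring

private lemma aux_between (a t : ℝ) (ha : 1 ≤ a) (ht : 0 < t) (h : t + t⁻¹ ≤ a + a⁻¹) :
    a⁻¹ ≤ t ∧ t ≤ a := by
  have ha0 : 0 < a := by linarith
  have e1 : t * t⁻¹ = 1 := mul_inv_cancel₀ ht.ne'
  have e2 : a * a⁻¹ = 1 := mul_inv_cancel₀ ha0.ne'
  have h' : t * a * (t + t⁻¹) ≤ t * a * (a + a⁻¹) :=
    mul_le_mul_of_nonneg_left h (mul_pos ht ha0).le
  have key : (t - a) * (a * t - 1) ≤ 0 := by nlinarith [h', e1, e2]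
  constructor
  · rw [inv_le_iff_one_le_mul₀ ha0]
    nlinarith [key, mul_pos ha0 ht, sq_nonneg (a - 1), sq_nonneg (t - a)]
  · nlinarith [key, mul_pos ha0 ht, sq_nonneg (a - 1), sq_nonneg (t - a)]

private lemma aux_between' (a t : ℝ) (ha : 1 ≤ a) (ht : 0 < t) (h1 : a⁻¹ ≤ t) (h2 : t ≤ a) :
    t + t⁻¹ ≤ a + a⁻¹ := by
  have ha0 : 0 < a := by linarith
  have e1 : t * t⁻¹ = 1 := mul_inv_cancel₀ ht.ne'
  have e2 : a * a⁻¹ = 1 := mul_inv_cancel₀ ha0.ne'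
  have hat : 1 ≤ a * t := by
    have := mul_le_mul_of_nonneg_left h1 ha0.le
    nlinarith
  have hfac : 0 ≤ (a - t) * (a * t - 1) := mul_nonneg (by linarith) (by linarith)
  nlinarith [hfac, e1, e2, mul_pos ha0 ht]

private lemma aux_ratio' (A B p q : ℝ) (hA : 0 < A) (hB : 0 < B)
    (e1 : A^2 = p) (e2 : B^2 = q) : A/B + (A/B)⁻¹ = (p + q)/(A*B) := by
  rw [inv_div]
  field_simp
  linear_combination e1 + e2

private lemma aux_ratio (d₁ d₂ : ℝ) (h1 : d₁ ≠ 0) (h2 : d₂ ≠ 0) :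
    |d₁/d₂| + |d₁/d₂|⁻¹ = (d₁^2 + d₂^2) / |d₁*d₂| := by
  rw [abs_div, abs_mul]
  exact aux_ratio' _ _ _ _ (abs_pos.2 h1) (abs_pos.2 h2) (sq_abs _) (sq_abs _)

private lemma aux_rewrite (x y : ℝ) (hy : y ≠ 0) :
    x^2/|y| + |y| + |y|⁻¹ = (x^2 + y^2 + 1) / |y| := by
  have e : |y|^2 = y^2 := sq_abs _
  have a : |y| ≠ 0 := abs_ne_zero.2 hy
  field_simp
  ring_nf
  rw [e]

set_option maxHeartbeats 1600000 in
theorem singular_value_support_condition (n : ℕ) (hn : 1 ≤ n) (x : ℝ) (y : ℝ) (hy : y ≠ 0) :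
    (∃ (k₁ k₂ : Matrix (Fin 2) (Fin 2) ℝ) (d₁ d₂ : ℝ),
      k₁ᵀ * k₁ = 1 ∧ k₁.det = 1 ∧ k₂ᵀ * k₂ = 1 ∧ k₂.det = 1 ∧
      d₁ ≠ 0 ∧ d₂ ≠ 0 ∧ ((n : ℝ))⁻¹ ≤ |d₁ / d₂| ∧ |d₁ / d₂| ≤ (n : ℝ) ∧
      !![y, x; 0, 1] = k₁ * Matrix.diagonal ![d₁, d₂] * k₂) ↔
    x ^ 2 / |y| + |y| + |y|⁻¹ ≤ (n : ℝ) + ((n : ℝ))⁻¹ := by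
  have hn1 : (1:ℝ) ≤ (n:ℝ) := by exact_mod_cast hn
  have hay : 0 < |y| := abs_pos.2 hy
  constructor
  · rintro ⟨k₁, k₂, d₁, d₂, hk1, hk1d, hk2, hk2d, hd1, hd2, hb1, hb2, heq⟩
    set D : Matrix (Fin 2) (Fin 2) ℝ := Matrix.diagonal ![d₁, d₂] with hD
    have hdetg : y = d₁ * d₂ := by
      have := congrArg Matrix.det heq
      rw [Matrix.det_fin_two_of] at this
      rw [Matrix.det_mul, Matrix.det_mul, hk1d, hk2d, hD, Matrix.det_diagonal,
        Fin.prod_univ_two] at this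
      simpa using this
    have htr : y^2 + x^2 + 1 = d₁^2 + d₂^2 := by
      have hk2' : k₂ * k₂ᵀ = 1 := mul_eq_one_comm.mp hk2
      have htr0 : Matrix.trace (!![y, x; 0, 1] * (!![y, x; 0, 1])ᵀ : Matrix (Fin 2) (Fin 2) ℝ)
          = Matrix.trace (D * Dᵀ) := by
        rw [heq]
        rw [Matrix.transpose_mul, Matrix.transpose_mul]
        have : k₁ * D * k₂ * (k₂ᵀ * (Dᵀ * k₁ᵀ)) = k₁ * (D * Dᵀ) * k₁ᵀ := by
          rw [show k₁ * D * k₂ * (k₂ᵀ * (Dᵀ * k₁ᵀ)) = k₁ * D * (k₂ * k₂ᵀ) * (Dᵀ * k₁ᵀ) by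
            noncomm_ring, hk2']
          noncomm_ring
        rw [this, Matrix.trace_mul_comm, show k₁ᵀ * (k₁ * (D * Dᵀ)) = k₁ᵀ * k₁ * (D * Dᵀ) by
          noncomm_ring, hk1, one_mul]
      have hL : Matrix.trace (!![y, x; 0, 1] * (!![y, x; 0, 1])ᵀ : Matrix (Fin 2) (Fin 2) ℝ)
          = y^2 + x^2 + 1 := by
        have ht : (!![y, x; 0, 1] : Matrix (Fin 2) (Fin 2) ℝ)ᵀ = !![y, 0; x, 1] := by
          ext i j; fin_cases i <;> fin_cases j <;> rfl
        rw [ht, Matrix.mul_fin_two, Matrix.trace_fin_two_of]; ring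
      have hR : Matrix.trace (D * Dᵀ) = d₁^2 + d₂^2 := by
        rw [hD, Matrix.diagonal_transpose, Matrix.diagonal_mul_diagonal, Matrix.trace_diagonal]
        simp [Fin.sum_univ_two]; ring
      rw [hL, hR] at htr0; exact htr0
    have htpos : 0 < |d₁ / d₂| := abs_pos.2 (div_ne_zero hd1 hd2)
    have hratio := aux_ratio d₁ d₂ hd1 hd2
    rw [← hdetg] at hratio
    rw [aux_rewrite x y hy]
    have : |d₁/d₂| + |d₁/d₂|⁻¹ ≤ (n:ℝ) + ((n:ℝ))⁻¹ :=
      aux_between' _ _ hn1 htpos hb1 hb2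
    rw [hratio, ← htr] at this
    calc (x^2 + y^2 + 1)/|y| = (y^2 + x^2 + 1)/|y| := by ring_nf
    _ ≤ (n:ℝ) + ((n:ℝ))⁻¹ := this
  · intro h
    obtain ⟨c, s, hcs, horth⟩ : ∃ c s : ℝ, c^2 + s^2 = 1 ∧
        (y*c + x*s) * (-(y*s) + x*c) + s*c = 0 := by
      set θ : ℝ := ((x^2 - y^2 + 1 : ℝ) - (2*x*y : ℝ)*Complex.I : ℂ).arg with hθ
      refine ⟨Real.cos (θ/2), Real.sin (θ/2), Real.cos_sq_add_sin_sq _, ?_⟩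
      have hsin : Real.sin θ = 2 * Real.sin (θ/2) * Real.cos (θ/2) := by
        have h2 := Real.sin_two_mul (θ/2)
        rw [show 2 * (θ/2) = θ by ring] at h2
        exact h2
      have hcos : Real.cos θ = Real.cos (θ/2)^2 - Real.sin (θ/2)^2 := by
        have h2 : Real.cos (2 * (θ/2)) = 2 * Real.cos (θ/2) ^ 2 - 1 := Real.cos_two_mul _
        rw [show 2 * (θ/2) = θ by ring] at h2
        rw [h2]; linarith [Real.cos_sq_add_sin_sq (θ/2)]
      have horth0 := aux_arg (x^2 - y^2 + 1) (2*x*y)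
      rw [← hθ, hsin, hcos] at horth0
      nlinarith [horth0, Real.cos_sq_add_sin_sq (θ/2)]
    have hdetM : (y*c + x*s)*c - (-(y*s) + x*c)*s = y := by linear_combination y * hcs
    have hpos : 0 < (y*c + x*s)^2 + s^2 := by
      rcases eq_or_ne s 0 with h0 | h0
      · have hc2 : c^2 = 1 := by rw [← hcs, h0]; ring
        have he : (y*c + x*s)^2 = y^2 := by rw [h0]; nlinarith
        have hy2 : 0 < y^2 := by positivity
        nlinarith [sq_nonneg s]
      · have : 0 < s^2 := by positivity
        nlinarith [sq_nonneg (y*c + x*s)]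
    obtain ⟨d₁, hd1pos, hd1sq⟩ : ∃ d : ℝ, 0 < d ∧ d^2 = (y*c + x*s)^2 + s^2 :=
      ⟨Real.sqrt ((y*c + x*s)^2 + s^2), Real.sqrt_pos.2 hpos, Real.sq_sqrt hpos.le⟩
    obtain ⟨d₂, hd₂⟩ : ∃ z : ℝ, z = y / d₁ := ⟨_, rfl⟩
    have hdd : d₁ ≠ 0 := hd1pos.ne'
    have hd2ne : d₂ ≠ 0 := by rw [hd₂]; exact div_ne_zero hy hdd
    have hprod : d₁ * d₂ = y := by rw [hd₂]; field_simp
    have hnorm2 : ((-(y*s) + x*c)^2 + c^2) * d₁^2 = y^2 := by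
      rw [hd1sq]
      linear_combination ((y*c+x*s)*(-(y*s)+x*c) + s*c) * horth +
        ((y*c+x*s)*c - (-(y*s)+x*c)*s + y) * hdetM
    have hd2sq : d₂^2 = (-(y*s) + x*c)^2 + c^2 := by
      have h1 : d₂^2 * d₁^2 = y^2 := by rw [hd₂]; field_simp
      have hne : d₁^2 ≠ 0 := by positivity
      have h2 : d₂^2 * d₁^2 = ((-(y*s) + x*c)^2 + c^2) * d₁^2 := by rw [h1, hnorm2]
      exact mul_right_cancel₀ hne h2
    have hsum : d₁^2 + d₂^2 = x^2 + y^2 + 1 := by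
      rw [hd1sq, hd2sq]; linear_combination (x^2 + y^2 + 1) * hcs
    have htpos : 0 < |d₁ / d₂| := abs_pos.2 (div_ne_zero hdd hd2ne)
    have hratio := aux_ratio d₁ d₂ hdd hd2ne
    rw [hprod] at hratio
    have hle : |d₁/d₂| + |d₁/d₂|⁻¹ ≤ (n:ℝ) + ((n:ℝ))⁻¹ := by
      rw [hratio, hsum]
      rw [aux_rewrite x y hy] at h
      convert h using 2
    obtain ⟨hb1, hb2⟩ := aux_between _ _ hn1 htpos hle
    refine ⟨!![(y*c+x*s)/d₁, (-(y*s)+x*c)/d₂; s/d₁, c/d₂], !![c, s; -s, c], d₁, d₂,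
      ?_, ?_, ?_, ?_, hdd, hd2ne, hb1, hb2, ?_⟩
    · have ht : (!![(y*c+x*s)/d₁, (-(y*s)+x*c)/d₂; s/d₁, c/d₂] : Matrix (Fin 2) (Fin 2) ℝ)ᵀ
          = !![(y*c+x*s)/d₁, s/d₁; (-(y*s)+x*c)/d₂, c/d₂] := by
        ext i j; fin_cases i <;> fin_cases j <;> rfl
      rw [ht, Matrix.mul_fin_two, Matrix.one_fin_two]
      refine Matrix.ext fun i j => ?_
      fin_cases i <;> fin_cases j <;> simp <;> field_simp
      · linear_combination -hd1sq
      · linear_combination horth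
      · linear_combination horth
      · linear_combination -hd2sq
    · rw [Matrix.det_fin_two_of]
      field_simp
      linear_combination hdetM - hprod
    · have ht : (!![c, s; -s, c] : Matrix (Fin 2) (Fin 2) ℝ)ᵀ = !![c, -s; s, c] := by
        ext i j; fin_cases i <;> fin_cases j <;> rfl
      rw [ht, Matrix.mul_fin_two, Matrix.one_fin_two]
      refine Matrix.ext fun i j => ?_
      fin_cases i <;> fin_cases j <;> simp <;> nlinarith [hcs]
    · rw [Matrix.det_fin_two_of]; nlinarith [hcs]
    · have hDdiag : (Matrix.diagonal ![d₁, d₂] : Matrix (Fin 2) (Fin 2) ℝ) = !![d₁, 0; 0, d₂] := by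
        ext i j; fin_cases i <;> fin_cases j <;> simp [Matrix.diagonal]
      rw [hDdiag, Matrix.mul_fin_two, Matrix.mul_fin_two]
      refine Matrix.ext fun i j => ?_
      fin_cases i <;> fin_cases j <;> simp <;> field_simp
      · linear_combination -hdetM
      · linear_combination -x*hcs
      · ring
      · linear_combination -hcs
end

section
/- Let (rₙ) be a sequence of positive real numbers with rₙ → ∞, let α, β > 0, let b > 0 be a real number, and let f be a complex-valued continuously differentiable function on the interval [0, b]. Then lim_{n→∞} ∫_0^b f(x) · sin(α rₙ x)/(β x) dx = (π/(2β)) · f(0). -/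
open MeasureTheory Filter
open Real Set

lemma antider (t : ℝ) (x : ℝ) :
    HasDerivAt (fun x => -(Real.exp (-(t*x)) * (t * Real.sin x + Real.cos x)) / (1+t^2))
      (Real.exp (-(t*x)) * Real.sin x) x := by
  have h1t : (1:ℝ) + t^2 ≠ 0 := by positivity
  have hexp : HasDerivAt (fun x : ℝ => Real.exp (-(t*x))) (Real.exp (-(t*x)) * (-t)) x := by
    simpa using (((hasDerivAt_id x).const_mul t).neg).exp
  have h := ((hexp.mul (((Real.hasDerivAt_sin x).const_mul t).add (Real.hasDerivAt_cos x))).neg).div_const (1+t^2)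
  refine h.congr_deriv ?_
  simp only [Pi.add_apply]
  field_simp
  ring

lemma key1 (t R : ℝ) : ∫ x in (0:ℝ)..R, Real.exp (-(t*x)) * Real.sin x
    = (1 - Real.exp (-(t*R)) * (t * Real.sin R + Real.cos R)) / (1 + t^2) := by
  rw [intervalIntegral.integral_eq_sub_of_hasDerivAt (fun x _ => antider t x)
    (Continuous.intervalIntegrable (by fun_prop) _ _)]
  simp
  ring

lemma expint {c : ℝ} (hc : 0 < c) : ∫ t in Set.Ioi (0:ℝ), Real.exp (-(c*t)) = 1/c := by
  have h := integral_Ioi_of_hasDerivAt_of_tendsto (f := fun t => -Real.exp (-(c*t))/c)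
    (f' := fun t => Real.exp (-(c*t))) (a := 0) (m := 0) ?_ ?_ ?_ ?_
  · rw [h]; simp; rw [neg_div, neg_neg, one_div]
  · have : Continuous fun t : ℝ => -Real.exp (-(c*t))/c := by fun_prop
    exact this.continuousWithinAt
  · intro x hx
    have hexp : HasDerivAt (fun t : ℝ => Real.exp (-(c*t))) (Real.exp (-(c*x)) * (-c)) x := by
      simpa using (((hasDerivAt_id x).const_mul c).neg).exp
    have := (hexp.neg).div_const c
    refine this.congr_deriv ?_
    field_simp
  · simpa using exp_neg_integrableOn_Ioi 0 hc
  · have h2 : Tendsto (fun t : ℝ => Real.exp (-(c*t))) atTop (nhds 0) := by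
      apply Real.tendsto_exp_atBot.comp
      apply Filter.tendsto_neg_atBot_iff.mpr
      exact Tendsto.const_mul_atTop hc tendsto_id
    have := (h2.neg).div_const c
    simpa using this

lemma abs_sin_le_of_pos {x : ℝ} (hx : 0 < x) : |Real.sin x| ≤ x := by
  rcases le_or_gt x 1 with h | h
  · rw [abs_of_nonneg (Real.sin_nonneg_of_nonneg_of_le_pi (le_of_lt hx) (by linarith [Real.pi_gt_three]))]
    exact le_of_lt (Real.sin_lt hx)
  · exact le_trans (Real.abs_sin_le_one x) (le_of_lt h)

lemma fubini_int (R : ℝ) :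
    Integrable (Function.uncurry fun x t => Real.exp (-(t*x)) * Real.sin x)
      ((volume.restrict (Ioc 0 R)).prod (volume.restrict (Ioi 0))) := by
  have hm : AEStronglyMeasurable (Function.uncurry fun x t => Real.exp (-(t*x)) * Real.sin x)
      ((volume.restrict (Ioc 0 R)).prod (volume.restrict (Ioi 0))) := by
    apply Continuous.aestronglyMeasurable
    fun_prop
  rw [MeasureTheory.integrable_prod_iff hm]
  constructor
  · filter_upwards [ae_restrict_mem measurableSet_Ioc] with x hx
    have : Integrable (fun t => Real.exp (-(x*t))) (volume.restrict (Ioi 0)) := by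
      simpa [IntegrableOn, neg_mul] using exp_neg_integrableOn_Ioi 0 hx.1
    have := this.mul_const (Real.sin x)
    apply this.congr
    filter_upwards with t
    simp [Function.uncurry, mul_comm x t]
  · have hcong : ∀ᵐ x ∂(volume.restrict (Ioc 0 R)),
        (fun x => ∫ t in Ioi (0:ℝ), ‖Real.exp (-(t*x)) * Real.sin x‖) x = |Real.sin x| / x := by
      filter_upwards [ae_restrict_mem measurableSet_Ioc] with x hx
      simp only [norm_mul, Real.norm_eq_abs, Real.abs_exp]
      rw [integral_mul_const]
      have : ∫ t in Ioi (0:ℝ), Real.exp (-(t*x)) = 1/x := by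
        rw [← expint hx.1]
        congr 1; ext t; rw [mul_comm]
      rw [this]; ring
    simp only [Function.uncurry]
    rw [integrable_congr hcong]
    apply Integrable.mono' (g := fun _ => (1:ℝ)) (integrable_const 1)
    · apply Measurable.aestronglyMeasurable
      fun_prop
    · filter_upwards [ae_restrict_mem measurableSet_Ioc] with x hx
      rw [Real.norm_eq_abs, abs_div, abs_abs, abs_of_pos hx.1, div_le_one hx.1]
      exact abs_sin_le_of_pos hx.1

lemma ptbound {R : ℝ} (t : ℝ) (ht0 : 0 < t) :
    ‖Real.exp (-(t*R)) * (t * Real.sin R + Real.cos R) / (1+t^2)‖ ≤ 2 * Real.exp (-R * t) := by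
  have h1 : |t * Real.sin R + Real.cos R| ≤ t + 1 := by
    calc |t * Real.sin R + Real.cos R| ≤ |t * Real.sin R| + |Real.cos R| := abs_add_le _ _
      _ ≤ t * 1 + 1 := by
          rw [abs_mul, abs_of_pos ht0]
          gcongr
          exacts [Real.abs_sin_le_one R, Real.abs_cos_le_one R]
      _ = t + 1 := by ring
  have h2 : t + 1 ≤ 2 * (1 + t^2) := by nlinarith
  rw [Real.norm_eq_abs, abs_div, abs_mul, Real.abs_exp, abs_of_pos (by positivity : (0:ℝ) < 1 + t^2)]
  rw [div_le_iff₀ (by positivity)]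
  calc Real.exp (-(t*R)) * |t * Real.sin R + Real.cos R| ≤ Real.exp (-(t*R)) * (2 * (1+t^2)) := by
        apply mul_le_mul_of_nonneg_left (le_trans h1 h2) (Real.exp_nonneg _)
    _ = 2 * Real.exp (-R * t) * (1+t^2) := by rw [mul_comm t R]; ring_nf

lemma err_int {R : ℝ} (hR : 0 < R) :
    Integrable (fun t => Real.exp (-(t*R)) * (t * Real.sin R + Real.cos R) / (1+t^2))
      (volume.restrict (Ioi 0)) := by
  apply Integrable.mono' (g := fun t => 2 * Real.exp (-R * t))
    ((exp_neg_integrableOn_Ioi 0 hR).const_mul 2)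
  · apply Measurable.aestronglyMeasurable; fun_prop
  · filter_upwards [ae_restrict_mem measurableSet_Ioi] with t ht
    exact ptbound t ht

lemma key2 {R : ℝ} (hR : 0 < R) :
    ∫ x in (0:ℝ)..R, Real.sin x / x
      = π/2 - ∫ t in Ioi (0:ℝ), Real.exp (-(t*R)) * (t * Real.sin R + Real.cos R) / (1+t^2) := by
  rw [intervalIntegral.integral_of_le hR.le]
  have step1 : ∫ x in Ioc (0:ℝ) R, Real.sin x / x
      = ∫ x in Ioc (0:ℝ) R, ∫ t in Ioi (0:ℝ), Real.exp (-(t*x)) * Real.sin x := by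
    apply setIntegral_congr_fun measurableSet_Ioc
    intro x hx
    dsimp only
    rw [integral_mul_const]
    have : ∫ t in Ioi (0:ℝ), Real.exp (-(t*x)) = 1/x := by
      rw [← expint hx.1]; congr 1; ext t; rw [mul_comm]
    rw [this]; ring
  rw [step1, MeasureTheory.integral_integral_swap (fubini_int R)]
  have step2 : ∫ t in Ioi (0:ℝ), ∫ x in Ioc (0:ℝ) R, Real.exp (-(t*x)) * Real.sin x
      = ∫ t in Ioi (0:ℝ), ((1+t^2)⁻¹ - Real.exp (-(t*R)) * (t * Real.sin R + Real.cos R) / (1+t^2)) := by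
    apply setIntegral_congr_fun measurableSet_Ioi
    intro t _
    dsimp only
    rw [← intervalIntegral.integral_of_le hR.le, key1]
    rw [sub_div, one_div]
  rw [step2, integral_sub (integrable_inv_one_add_sq.restrict) (err_int hR)]
  congr 1
  rw [integral_Ioi_inv_one_add_sq, Real.arctan_zero, sub_zero]

lemma err_bound {R : ℝ} (hR : 0 < R) :
    ‖∫ t in Ioi (0:ℝ), Real.exp (-(t*R)) * (t * Real.sin R + Real.cos R) / (1+t^2)‖ ≤ 2 / R := by
  have h : ‖∫ t in Ioi (0:ℝ), Real.exp (-(t*R)) * (t * Real.sin R + Real.cos R) / (1+t^2)‖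
      ≤ ∫ t in Ioi (0:ℝ), 2 * Real.exp (-R * t) := by
    apply norm_integral_le_of_norm_le ((exp_neg_integrableOn_Ioi 0 hR).const_mul 2)
    filter_upwards [ae_restrict_mem measurableSet_Ioi] with t ht
    exact ptbound t ht
  refine le_trans h (le_of_eq ?_)
  have : ∀ t:ℝ, -R * t = -(R*t) := fun t => by ring
  simp_rw [this]
  rw [integral_const_mul, expint hR]
  ring

lemma dirichlet : Tendsto (fun R => ∫ x in (0:ℝ)..R, Real.sin x / x) atTop (nhds (π/2)) := by
  have hE : Tendsto (fun R => ∫ t in Ioi (0:ℝ), Real.exp (-(t*R)) * (t * Real.sin R + Real.cos R) / (1+t^2))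
      atTop (nhds 0) := by
    refine squeeze_zero_norm' (a := fun R : ℝ => 2 / R) ?_ ?_
    · filter_upwards [eventually_gt_atTop (0:ℝ)] with R hR
      exact err_bound hR
    · simpa [div_eq_mul_inv] using tendsto_inv_atTop_zero.const_mul (2:ℝ)
  have := (tendsto_const_nhds (x := π/2) (f := atTop)).sub hE
  rw [sub_zero] at this
  apply this.congr'
  filter_upwards [eventually_gt_atTop (0:ℝ)] with R hR
  exact (key2 hR).symm

lemma RL (G : ℝ → ℂ) (c : ℕ → ℝ) (hc : Tendsto c atTop atTop ∨ Tendsto c atTop atBot) :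
    Tendsto (fun n => ∫ x : ℝ, G x * Complex.exp ((c n : ℂ) * x * Complex.I)) atTop (nhds 0) := by
  have key : ∀ w : ℝ, FourierTransform.fourier G (-w / (2*π))
      = ∫ x : ℝ, G x * Complex.exp ((w : ℂ) * x * Complex.I) := by
    intro w
    rw [Real.fourier_real_eq_integral_exp_smul]
    congr 1
    ext v
    rw [smul_eq_mul, mul_comm]
    congr 2
    have hπ : (2:ℝ) * π ≠ 0 := by positivity
    push_cast
    have hπc : (π:ℂ) ≠ 0 := by exact_mod_cast Real.pi_ne_zero
    field_simp
  have hw : Tendsto (fun n => -(c n) / (2*π)) atTop (cocompact ℝ) := by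
    rw [cocompact_eq_atBot_atTop]
    rcases hc with h | h
    · apply Tendsto.mono_right _ le_sup_left
      have : ∀ x : ℝ, -x / (2*π) = x * (-(2*π)⁻¹) := fun x => by ring
      simp_rw [this]
      exact h.atTop_mul_const_of_neg (by simp; positivity)
    · apply Tendsto.mono_right _ le_sup_right
      have : ∀ x : ℝ, -x / (2*π) = x * (-(2*π)⁻¹) := fun x => by ring
      simp_rw [this]
      exact h.atBot_mul_const_of_neg (by simp; positivity)
  have := (Real.zero_at_infty_fourier G).comp hw
  apply this.congr
  intro n
  exact key (c n)

lemma sin_exp (z : ℂ) : Complex.sin z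
    = (Complex.exp (-z * Complex.I) - Complex.exp (z * Complex.I)) * Complex.I / 2 := rfl

theorem dirichlet_kernel_limit_at_zero
    (r : ℕ → ℝ) (hr : ∀ n, 0 < r n) (hr' : Tendsto r atTop atTop)
    (α β : ℝ) (hα : 0 < α) (hβ : 0 < β)
    (b : ℝ) (hb : 0 < b)
    (f : ℝ → ℂ) (hf : ContDiffOn ℝ 1 f (Set.Icc 0 b)) :
    Tendsto
      (fun n => ∫ x in (0:ℝ)..b, f x * ((Real.sin (α * r n * x) / (β * x) : ℝ) : ℂ))
      atTop (nhds (((Real.pi / (2 * β) : ℝ) : ℂ) * f 0)) := by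
  set l : ℕ → ℝ := fun n => α * r n with hldef
  have hl : Tendsto l atTop atTop := hr'.const_mul_atTop hα
  have hlpos : ∀ n, 0 < l n := fun n => mul_pos hα (hr n)
  -- Lipschitz-type bound
  obtain ⟨C, hC0, hC⟩ : ∃ C, 0 ≤ C ∧ ∀ x ∈ Icc (0:ℝ) b, ‖f x - f 0‖ ≤ C * x := by
    have hd : ContinuousOn (derivWithin f (Icc 0 b)) (Icc 0 b) :=
      hf.continuousOn_derivWithin (uniqueDiffOn_Icc hb) le_rfl
    obtain ⟨C, hC⟩ := (isCompact_Icc).exists_bound_of_continuousOn hd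
    refine ⟨max C 0, le_max_right _ _, fun x hx => ?_⟩
    have := Convex.norm_image_sub_le_of_norm_derivWithin_le (C := max C 0)
      (hf.differentiableOn one_ne_zero) (fun y hy => le_trans (hC y hy) (le_max_left _ _))
      (convex_Icc 0 b) (Set.left_mem_Icc.mpr hb.le) hx
    rw [sub_zero, Real.norm_eq_abs, abs_of_nonneg hx.1] at this
    exact this
  set g : ℝ → ℂ := fun x => (f x - f 0) / (x : ℂ) with hgdef
  have hgcont : ContinuousOn g (Ioc 0 b) := by
    apply ContinuousOn.div
    · exact ((hf.continuousOn.mono Ioc_subset_Icc_self).sub continuousOn_const)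
    · exact Complex.continuous_ofReal.continuousOn
    · intro x hx
      simpa using ne_of_gt hx.1
  have hgbdd : ∀ x ∈ Ioc (0:ℝ) b, ‖g x‖ ≤ C := by
    intro x hx
    rw [hgdef]
    simp only [norm_div, Complex.norm_real]
    rw [Real.norm_eq_abs, abs_of_pos hx.1, div_le_iff₀ hx.1]
    exact hC x (Ioc_subset_Icc_self hx)
  have hgint : IntegrableOn g (Ioc 0 b) := by
    apply Integrable.mono' (g := fun _ => C)
      (integrableOn_const measure_Ioc_lt_top.ne)
      (hgcont.aestronglyMeasurable measurableSet_Ioc)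
    filter_upwards [ae_restrict_mem measurableSet_Ioc] with x hx
    exact hgbdd x hx
  set G : ℝ → ℂ := (Ioc 0 b).indicator g with hGdef
  have hGint : Integrable G := (integrable_indicator_iff measurableSet_Ioc).mpr hgint
  -- remainder term tends to 0
  have hrem : Tendsto (fun n => ∫ x : ℝ, G x * Complex.sin ((l n : ℂ) * x)) atTop (nhds 0) := by
    have expint' : ∀ (c : ℝ), Integrable (fun x : ℝ => G x * Complex.exp ((c:ℂ) * x * Complex.I)) := by
      intro c
      have h1 : Integrable (fun x : ℝ => Complex.exp ((c:ℂ) * x * Complex.I) * G x) := by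
        apply hGint.bdd_mul (c := 1)
        · apply Continuous.aestronglyMeasurable; fun_prop
        · refine Filter.Eventually.of_forall (fun x => ?_)
          have : ((c:ℂ) * x * Complex.I) = (((c * x : ℝ)):ℂ) * Complex.I := by push_cast; ring
          rw [this, Complex.norm_exp_ofReal_mul_I]
      exact h1.congr (by filter_upwards with x; rw [mul_comm])
    have hA : Tendsto (fun n => ∫ x : ℝ, G x * Complex.exp (((-(l n) : ℝ):ℂ) * x * Complex.I))
        atTop (nhds 0) := RL G (fun n => -(l n)) (Or.inr (tendsto_neg_atBot_iff.mpr hl))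
    have hB : Tendsto (fun n => ∫ x : ℝ, G x * Complex.exp (((l n : ℝ):ℂ) * x * Complex.I))
        atTop (nhds 0) := RL G l (Or.inl hl)
    have htend := ((hA.sub hB).mul_const (Complex.I / 2))
    rw [zero_sub, neg_zero, zero_mul] at htend
    apply htend.congr
    intro n
    rw [← integral_sub (expint' (-(l n))) (expint' (l n)), ← integral_mul_const]
    congr 1
    ext x
    rw [sin_exp]
    push_cast
    ring
  -- main term
  set S : ℝ → ℝ := fun R => ∫ x in (0:ℝ)..R, Real.sin x / x with hSdef
  have hMeq : ∀ n, (∫ x in (0:ℝ)..b, Real.sin (l n * x) / x) = S (l n * b) := by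
    intro n
    have hln : l n ≠ 0 := ne_of_gt (hlpos n)
    have hcomp := intervalIntegral.integral_comp_mul_left (a := 0) (b := b)
      (fun u => Real.sin u / u) hln
    rw [mul_zero] at hcomp
    have hpt : ∀ x : ℝ, Real.sin (l n * x) / x = l n * (Real.sin (l n * x) / (l n * x)) := by
      intro x
      rcases eq_or_ne x 0 with rfl | hx
      · simp
      · field_simp
    calc (∫ x in (0:ℝ)..b, Real.sin (l n * x) / x)
        = ∫ x in (0:ℝ)..b, l n * (Real.sin (l n * x) / (l n * x)) := by
          apply intervalIntegral.integral_congr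
          intro x _
          exact hpt x
      _ = l n * ∫ x in (0:ℝ)..b, Real.sin (l n * x) / (l n * x) := by
          rw [intervalIntegral.integral_const_mul]
      _ = S (l n * b) := by
          rw [hcomp, smul_eq_mul, hSdef]
          field_simp
  have hM : Tendsto (fun n => ∫ x in (0:ℝ)..b, Real.sin (l n * x) / x) atTop (nhds (π/2)) := by
    simp_rw [hMeq]
    exact dirichlet.comp (hl.atTop_mul_const hb)
  -- integrability of the pieces on Ioc 0 b
  have hsinint : ∀ n, IntegrableOn (fun x => Real.sin (l n * x) / x) (Ioc 0 b) := by
    intro n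
    apply Integrable.mono' (g := fun _ => l n)
      (integrableOn_const measure_Ioc_lt_top.ne)
      (by apply Measurable.aestronglyMeasurable; fun_prop)
    filter_upwards [ae_restrict_mem measurableSet_Ioc] with x hx
    rw [Real.norm_eq_abs, abs_div, abs_of_pos hx.1, div_le_iff₀ hx.1]
    have := abs_sin_le_of_pos (mul_pos (hlpos n) hx.1)
    linarith [this]
  have hgsint : ∀ n, IntegrableOn (fun x => g x * Complex.sin ((l n : ℂ) * x)) (Ioc 0 b) := by
    intro n
    have h1 : IntegrableOn (fun x : ℝ => Complex.sin ((l n : ℂ) * x) * g x) (Ioc 0 b) := by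
      apply hgint.bdd_mul (c := 1)
      · apply Continuous.aestronglyMeasurable; fun_prop
      · refine Filter.Eventually.of_forall (fun x => ?_)
        have : ((l n : ℂ) * x) = (((l n * x : ℝ)):ℂ) := by push_cast; ring
        rw [this, ← Complex.ofReal_sin, Complex.norm_real, Real.norm_eq_abs]
        exact Real.abs_sin_le_one _
    exact h1.congr (by filter_upwards with x; rw [mul_comm])
  -- decomposition
  have hdecomp : ∀ n, (∫ x in (0:ℝ)..b, f x * ((Real.sin (l n * x) / (β * x) : ℝ) : ℂ))
      = (β:ℂ)⁻¹ * ((((∫ x in (0:ℝ)..b, Real.sin (l n * x) / x : ℝ)):ℂ) * f 0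
          + ∫ x : ℝ, G x * Complex.sin ((l n : ℂ) * x)) := by
    intro n
    have hGs : (∫ x : ℝ, G x * Complex.sin ((l n : ℂ) * x))
        = ∫ x in Ioc (0:ℝ) b, g x * Complex.sin ((l n : ℂ) * x) := by
      rw [← MeasureTheory.integral_indicator measurableSet_Ioc]
      congr 1
      ext x
      rw [hGdef, Set.indicator_mul_left]
    have h1 : Integrable (fun x : ℝ => ((Real.sin (l n * x) / x : ℝ) : ℂ) * f 0)
        (volume.restrict (Ioc 0 b)) := by
      apply Integrable.mul_const
      exact (hsinint n).ofReal
    rw [hGs, ← intervalIntegral.integral_ofReal (f := fun x => Real.sin (l n * x) / x),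
      intervalIntegral.integral_of_le hb.le, intervalIntegral.integral_of_le hb.le,
      ← integral_mul_const, ← integral_add h1 (hgsint n),
      ← integral_const_mul]
    apply setIntegral_congr_fun measurableSet_Ioc
    intro x hx
    dsimp only
    have hx0 : (x:ℂ) ≠ 0 := by exact_mod_cast ne_of_gt hx.1
    have hβ0 : (β:ℂ) ≠ 0 := by exact_mod_cast ne_of_gt hβ
    have hsin : Complex.sin ((l n : ℂ) * x) = ((Real.sin (l n * x) : ℝ) : ℂ) := by
      rw [Complex.ofReal_sin]; push_cast; ring_nf
    rw [hgdef, hsin]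
    push_cast
    field_simp
    ring
  -- conclude
  have hfinal : Tendsto (fun n => (β:ℂ)⁻¹ * ((((∫ x in (0:ℝ)..b, Real.sin (l n * x) / x : ℝ)):ℂ) * f 0
      + ∫ x : ℝ, G x * Complex.sin ((l n : ℂ) * x))) atTop
      (nhds ((β:ℂ)⁻¹ * ((((π/2 : ℝ)):ℂ) * f 0 + 0))) := by
    apply Tendsto.const_mul
    apply Tendsto.add _ hrem
    apply Tendsto.mul_const
    exact (Complex.continuous_ofReal.tendsto _).comp hM
  have : ((β:ℂ)⁻¹ * ((((π/2 : ℝ)):ℂ) * f 0 + 0)) = ((Real.pi / (2 * β) : ℝ) : ℂ) * f 0 := by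
    have hβ0 : (β:ℂ) ≠ 0 := by exact_mod_cast ne_of_gt hβ
    rw [add_zero, ← mul_assoc]
    congr 1
    push_cast
    field_simp
  rw [this] at hfinal
  apply hfinal.congr
  intro n
  exact (hdecomp n).symm
end

section
/- For every natural number N and all complex numbers z, w with Re(z) > 0 and Re(w) > N, one has ∑_{j=0}^N binom(N, j) · Γ(z + j) · Γ(w − j) = Γ(z) · Γ(w − N) · Γ(z + w) / Γ(z + w − N). -/
theorem gamma_binomial_identity (N : ℕ) (z w : ℂ) (hz : 0 < z.re) (hw : (N : ℝ) < w.re) :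
    ∑ j ∈ Finset.range (N + 1),
      (N.choose j : ℂ) * Complex.Gamma (z + j) * Complex.Gamma (w - j) =
    Complex.Gamma z * Complex.Gamma (w - N) * Complex.Gamma (z + w) /
      Complex.Gamma (z + w - N) := by
  induction N generalizing z w with
  | zero =>
    have h : Complex.Gamma (z + w) ≠ 0 := by
      apply Complex.Gamma_ne_zero_of_re_pos
      simp only [Complex.add_re]
      simp at hw; linarith
    simp [h]
  | succ N ih =>
    have hwN : (N : ℝ) + 1 < w.re := by push_cast at hw; linarith
    have hsplit : ∑ j ∈ Finset.range (N + 1 + 1),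
          ((N+1).choose j : ℂ) * Complex.Gamma (z + j) * Complex.Gamma (w - j)
        = (∑ j ∈ Finset.range (N + 1),
            (N.choose j : ℂ) * Complex.Gamma (z + j) * Complex.Gamma (w - j))
          + (∑ j ∈ Finset.range (N + 1),
            (N.choose j : ℂ) * Complex.Gamma (z + 1 + j) * Complex.Gamma (w - 1 - j)) := by
      rw [Finset.sum_range_succ'
        (fun j => ((N+1).choose j : ℂ) * Complex.Gamma (z + j) * Complex.Gamma (w - j))]
      have h2 : ∀ j ∈ Finset.range (N + 1),
          ((N+1).choose (j+1) : ℂ) * Complex.Gamma (z + ((j+1 : ℕ) : ℂ)) * Complex.Gamma (w - ((j+1 : ℕ) : ℂ))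
          = (N.choose j : ℂ) * Complex.Gamma (z + 1 + j) * Complex.Gamma (w - 1 - j)
            + (N.choose (j+1) : ℂ) * Complex.Gamma (z + ((j+1 : ℕ) : ℂ)) * Complex.Gamma (w - ((j+1 : ℕ) : ℂ)) := by
        intro j _
        rw [Nat.choose_succ_succ, show z + ((j+1 : ℕ) : ℂ) = z + 1 + j by push_cast; ring,
          show w - ((j+1 : ℕ) : ℂ) = w - 1 - j by push_cast; ring]
        push_cast
        ring
      rw [Finset.sum_congr rfl h2, Finset.sum_add_distrib]
      have h4 := Finset.sum_range_succ'
        (fun j => (N.choose j : ℂ) * Complex.Gamma (z + j) * Complex.Gamma (w - j)) (N + 1)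
      rw [Finset.sum_range_succ, Nat.choose_succ_self] at h4
      simp only [Nat.cast_zero, CharP.cast_eq_zero, zero_mul, add_zero, Nat.choose_zero_right,
        Nat.cast_one, one_mul, sub_zero] at h4 ⊢
      linear_combination -h4
    rw [hsplit, ih z w hz (by push_cast at hw ⊢; linarith),
      ih (z + 1) (w - 1) (by simp [Complex.add_re]; linarith)
        (by simp [Complex.sub_re]; linarith)]
    have hg1 : Complex.Gamma (z + 1) = z * Complex.Gamma z :=
      Complex.Gamma_add_one z (by intro h; rw [h] at hz; simp at hz)
    have hg2 : Complex.Gamma (w - N) = (w - N - 1) * Complex.Gamma (w - N - 1) := by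
      have := Complex.Gamma_add_one (w - N - 1) (by
        intro h
        have := congrArg Complex.re h
        simp [Complex.sub_re] at this
        linarith)
      rw [show w - (N:ℂ) - 1 + 1 = w - N by ring] at this
      exact this
    have hg3 : Complex.Gamma (z + w - N) = (z + w - N - 1) * Complex.Gamma (z + w - N - 1) := by
      have := Complex.Gamma_add_one (z + w - N - 1) (by
        intro h
        have := congrArg Complex.re h
        simp [Complex.sub_re, Complex.add_re] at this
        linarith)
      rw [show z + w - (N:ℂ) - 1 + 1 = z + w - N by ring] at this
      exact this
    have hne : Complex.Gamma (z + w - N - 1) ≠ 0 := by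
      apply Complex.Gamma_ne_zero_of_re_pos
      simp [Complex.sub_re, Complex.add_re]
      linarith
    have hne2 : Complex.Gamma (z + w - N) ≠ 0 := by
      rw [hg3]
      apply mul_ne_zero _ hne
      intro h
      have := congrArg Complex.re h
      simp [Complex.sub_re, Complex.add_re] at this
      linarith
    rw [show z + 1 + (w - 1) = z + w by ring,
      show w - 1 - (N:ℂ) = w - N - 1 by ring,
      show z + w - ((N+1 : ℕ) : ℂ) = z + w - N - 1 by push_cast; ring,
      show w - ((N+1 : ℕ) : ℂ) = w - N - 1 by push_cast; ring,
      ← add_div, div_eq_div_iff hne2 hne, hg1, hg2, hg3]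
    ring
end

section
/- Let y be a nonzero real number, let a, b be nonnegative integers, let m ∈ {0, 1}, and let s₀ ∈ ℂ. Consider the integral ∫_{ℝ∖{0}} (t y)^a t^{−b} exp(−π(t² y² + t⁻²)) |t|^{2 s₀} sgn(t)^m d×t, where d×t = dt/|t|. If a + b + m is odd, the integral equals 0. If a + b + m is even, the integral equals 2 · y^a · |y|^{−s₀ − (a−b)/2} · K_{s₀ + (a−b)/2}(2π |y|), where the complex power |y|^{−s₀−(a−b)/2} of the positive real |y| is exp((−s₀−(a−b)/2)·log|y|). -/
open MeasureTheory

/-- The modified Bessel function of the second kind,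
`K_s(x) = (1/2) ∫₀^∞ exp(-(x/2)(t + t⁻¹)) t^(s-1) dt`. -/
noncomputable def besselK (s : ℂ) (x : ℝ) : ℂ :=
  (1 / 2) * ∫ t in Set.Ioi (0 : ℝ),
    (↑(Real.exp (-(x / 2) * (t + t⁻¹))) : ℂ) * (t : ℂ) ^ (s - 1)

open Set Complex

theorem mellin_type_integral_besselK (y : ℝ) (hy : y ≠ 0) (a b m : ℕ) (hm : m ≤ 1)
    (s₀ : ℂ) :
    (Odd (a + b + m) →
      (∫ t : ℝ, (((t * y : ℝ) : ℂ) ^ a * ((t : ℂ)⁻¹) ^ b *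
          (↑(Real.exp (-(Real.pi * (t ^ 2 * y ^ 2 + (t⁻¹) ^ 2)))) : ℂ) *
          (↑|t| : ℂ) ^ (2 * s₀) * (↑(Real.sign t) : ℂ) ^ m) / (↑|t| : ℂ)) = 0) ∧
    (Even (a + b + m) →
      (∫ t : ℝ, (((t * y : ℝ) : ℂ) ^ a * ((t : ℂ)⁻¹) ^ b *
          (↑(Real.exp (-(Real.pi * (t ^ 2 * y ^ 2 + (t⁻¹) ^ 2)))) : ℂ) *
          (↑|t| : ℂ) ^ (2 * s₀) * (↑(Real.sign t) : ℂ) ^ m) / (↑|t| : ℂ)) =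
      2 * (y : ℂ) ^ a * (↑|y| : ℂ) ^ (-s₀ - ((a : ℂ) - (b : ℂ)) / 2) *
        besselK (s₀ + ((a : ℂ) - (b : ℂ)) / 2) (2 * Real.pi * |y|)) := by
  have hy0 : (0:ℝ) < |y| := abs_pos.mpr hy
  have hYne : ((|y| : ℝ) : ℂ) ≠ 0 := by exact_mod_cast hy0.ne'
  set F : ℝ → ℂ := fun t => (((t * y : ℝ) : ℂ) ^ a * ((t : ℂ)⁻¹) ^ b *
      (↑(Real.exp (-(Real.pi * (t ^ 2 * y ^ 2 + (t⁻¹) ^ 2)))) : ℂ) *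
      (↑|t| : ℂ) ^ (2 * s₀) * (↑(Real.sign t) : ℂ) ^ m) / (↑|t| : ℂ) with hF
  have key : ∀ t : ℝ, F (-t) = (-1 : ℂ) ^ (a + b + m) * F t := by
    intro t
    simp only [hF]
    rw [abs_neg, Real.sign_neg, show ((-t) * y) = -(t * y) by ring, inv_neg, neg_sq, neg_sq]
    push_cast
    rw [show ((-(t:ℂ))⁻¹ : ℂ) = -(t:ℂ)⁻¹ by rw [inv_neg],
      neg_pow ((t:ℂ) * (y:ℂ)), neg_pow ((t : ℂ))⁻¹, neg_pow ((Real.sign t : ℝ) : ℂ),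
      pow_add, pow_add]
    ring
  have A : MeasurableEmbedding (fun x : ℝ => -x) :=
    (Homeomorph.neg ℝ).measurableEmbedding
  have hflip : (∫ t : ℝ, F t) = ∫ t : ℝ, F (-t) := by
    calc (∫ t : ℝ, F t) = ∫ t : ℝ, F t ∂(Measure.map Neg.neg volume) := by
          rw [Measure.map_neg_eq_self]
      _ = ∫ t : ℝ, F (-t) := A.integral_map F
  constructor
  · intro hodd
    have h1 : (∫ t : ℝ, F t) = -∫ t : ℝ, F t := by
      nth_rewrite 1 [hflip]
      simp_rw [key, hodd.neg_one_pow]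
      simp only [neg_one_mul]
      rw [integral_neg]
    linear_combination h1 / 2
  · intro heven
    have key2 : ∀ t : ℝ, F (-t) = F t := by
      intro t; rw [key, heven.neg_one_pow, one_mul]
    have half : (∫ t : ℝ, F t) = 2 * ∫ t in Ioi (0:ℝ), F t := by
      by_cases hInt : IntegrableOn F (Ioi (0:ℝ)) volume
      · have hIic : IntegrableOn F (Iic (0:ℝ)) volume := by
          have h1 : IntegrableOn (fun x => F (-x)) (Ici (0:ℝ)) volume := by
            simp_rw [key2]
            exact Iff.mpr integrableOn_Ici_iff_integrableOn_Ioi hInt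
          rw [IntegrableOn, ← Measure.map_neg_eq_self (volume : Measure ℝ)]
          rw [show (Measure.map Neg.neg (volume : Measure ℝ)).restrict (Iic 0)
              = Measure.map (fun x : ℝ => -x)
                ((volume : Measure ℝ).restrict ((fun x : ℝ => -x) ⁻¹' (Iic 0))) from
            (A.restrict_map _ _)]
          rw [A.integrable_map_iff]
          simpa [Function.comp_def, IntegrableOn] using h1
        have hneg : (∫ t in Iic (0:ℝ), F t) = ∫ t in Ioi (0:ℝ), F t := by
          rw [show (Iic (0:ℝ)) = Iic (-0) by norm_num, ← integral_comp_neg_Ioi]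
          exact setIntegral_congr_fun measurableSet_Ioi (fun x _ => key2 x)
        have split : (∫ t : ℝ, F t) = (∫ t in Iic (0:ℝ), F t) + ∫ t in Ioi (0:ℝ), F t := by
          rw [← setIntegral_union (Set.Iic_disjoint_Ioi le_rfl) measurableSet_Ioi hIic hInt,
            Set.Iic_union_Ioi, setIntegral_univ]
        rw [split, hneg]; ring
      · have h1 : (∫ t in Ioi (0:ℝ), F t) = 0 := integral_undef hInt
        have h2 : (∫ t : ℝ, F t) = 0 := integral_undef (fun h => hInt h.integrableOn)
        rw [h1, h2]; ring
    rw [half]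
    set s : ℂ := s₀ + ((a : ℂ) - (b : ℂ)) / 2 with hs
    set g : ℝ → ℂ := fun u =>
      (↑(Real.exp (-(2 * Real.pi * |y| / 2) * (u + u⁻¹))) : ℂ) * (u : ℂ) ^ (s - 1) with hg
    have hbK : besselK s (2 * Real.pi * |y|) = (1/2) * ∫ u in Ioi (0:ℝ), g u := rfl
    have c1 : (∫ x in Ioi (0:ℝ), g (|y| * x)) = |y|⁻¹ • ∫ u in Ioi (0:ℝ), g u := by
      simpa using integral_comp_mul_left_Ioi g 0 hy0
    have c2 : (∫ x in Ioi (0:ℝ), (|(2:ℝ)| * x ^ ((2:ℝ)-1)) • g (|y| * x ^ (2:ℝ)))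
        = ∫ x in Ioi (0:ℝ), g (|y| * x) :=
      integral_comp_rpow_Ioi (fun x => g (|y| * x)) two_ne_zero
    have c3 : ∀ x ∈ Ioi (0:ℝ), ((y:ℂ)^a * ((|y| : ℝ) : ℂ)^(-s) * ((|y| : ℝ) : ℂ)) *
        ((|(2:ℝ)| * x ^ ((2:ℝ)-1)) • g (|y| * x ^ (2:ℝ))) = 2 * F x := by
      intro x hx
      rw [mem_Ioi] at hx
      have hxne : x ≠ 0 := hx.ne'
      have hXne : ((x : ℝ) : ℂ) ≠ 0 := by exact_mod_cast hxne
      simp only [hg, hF]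
      have h2 : x ^ ((2:ℝ)) = x ^ (2:ℕ) := by
        rw [show (2:ℝ) = ((2:ℕ):ℝ) by norm_num, Real.rpow_natCast]
      rw [h2, show ((2:ℝ)-1) = (1:ℝ) by norm_num, Real.rpow_one, abs_of_pos hx,
        Real.sign_of_pos hx, show |(2:ℝ)| = 2 by norm_num]
      have hexp : -(2 * Real.pi * |y| / 2) * (|y| * x ^ (2:ℕ) + (|y| * x ^ (2:ℕ))⁻¹)
          = -(Real.pi * (x ^ 2 * y ^ 2 + (x⁻¹) ^ 2)) := by
        field_simp
        rw [← _root_.sq_abs y]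
        ring
      rw [hexp]
      set E : ℂ := (↑(Real.exp (-(Real.pi * (x ^ 2 * y ^ 2 + (x⁻¹) ^ 2)))) : ℂ) with hE
      have hsplit : ((|y| * x ^ (2:ℕ) : ℝ) : ℂ) ^ (s - 1)
          = ((|y| : ℝ) : ℂ) ^ (s-1) * (((x:ℝ):ℂ) ^ (s-1) * ((x:ℝ):ℂ) ^ (s-1)) := by
        rw [show ((|y| * x ^ (2:ℕ) : ℝ) : ℂ) = ((|y|:ℝ):ℂ) * ((x^(2:ℕ) : ℝ) : ℂ) by
            push_cast; ring,
          mul_cpow_ofReal_nonneg (abs_nonneg y) (sq_nonneg x),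
          show ((x^(2:ℕ) : ℝ) : ℂ) = ((x:ℝ):ℂ) * ((x:ℝ):ℂ) by push_cast; ring,
          ← mul_cpow_ofReal_nonneg hx.le hx.le,
          mul_cpow_ofReal_nonneg hx.le hx.le]
      rw [hsplit]
      have e1 : ((x:ℝ):ℂ)^a * (((x:ℝ):ℂ)⁻¹)^b * ((x:ℝ):ℂ)^(2*s₀) * (((x:ℝ):ℂ))⁻¹
          = ((x:ℝ):ℂ) ^ ((a:ℂ) - (b:ℂ) + 2*s₀ - 1) := by
        rw [← Complex.cpow_natCast ((x:ℝ):ℂ) a, inv_pow, ← Complex.cpow_natCast ((x:ℝ):ℂ) b,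
          ← Complex.cpow_neg,
          show (((x:ℝ):ℂ))⁻¹ = ((x:ℝ):ℂ) ^ (-1:ℂ) by rw [Complex.cpow_neg_one],
          ← Complex.cpow_add _ _ hXne, ← Complex.cpow_add _ _ hXne,
          ← Complex.cpow_add _ _ hXne]
        congr 1
        try ring
      have e2 : ((x:ℝ):ℂ) * (((x:ℝ):ℂ)^(s-1) * ((x:ℝ):ℂ)^(s-1))
          = ((x:ℝ):ℂ) ^ ((a:ℂ) - (b:ℂ) + 2*s₀ - 1) := by
        nth_rewrite 1 [← Complex.cpow_one ((x:ℝ):ℂ)]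
        rw [← Complex.cpow_add _ _ hXne, ← Complex.cpow_add _ _ hXne]
        congr 1
        try rw [hs]; try ring
      have e3 : ((|y|:ℝ):ℂ)^(-s) * (((|y|:ℝ):ℂ) * ((|y|:ℝ):ℂ)^(s-1)) = 1 := by
        nth_rewrite 2 [← Complex.cpow_one ((|y|:ℝ):ℂ)]
        rw [← Complex.cpow_add _ _ hYne, ← Complex.cpow_add _ _ hYne,
          show -s + (1 + (s-1)) = 0 by ring, Complex.cpow_zero]
      calc ((y:ℂ)^a * ((|y| : ℝ) : ℂ)^(-s) * ((|y| : ℝ) : ℂ)) *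
          ((2 * x) • (E * (((|y|:ℝ):ℂ) ^ (s-1) * (((x:ℝ):ℂ) ^ (s-1) * ((x:ℝ):ℂ) ^ (s-1)))))
          = 2 * (y:ℂ)^a * E * (((|y|:ℝ):ℂ)^(-s) * (((|y|:ℝ):ℂ) * ((|y|:ℝ):ℂ)^(s-1))) *
            (((x:ℝ):ℂ) * (((x:ℝ):ℂ)^(s-1) * ((x:ℝ):ℂ)^(s-1))) := by
            rw [Complex.real_smul]; push_cast; ring
        _ = 2 * (y:ℂ)^a * E *
            (((x:ℝ):ℂ)^a * (((x:ℝ):ℂ)⁻¹)^b * ((x:ℝ):ℂ)^(2*s₀) * (((x:ℝ):ℂ))⁻¹) := by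
            rw [e2, e3, e1]; ring
        _ = 2 * ((((x * y : ℝ) : ℂ) ^ a * ((x : ℂ)⁻¹) ^ b * E * ((x:ℝ) : ℂ) ^ (2 * s₀) *
              ((1:ℝ) : ℂ) ^ m) / ((x:ℝ) : ℂ)) := by
            push_cast
            rw [mul_pow]
            ring
    calc 2 * ∫ t in Ioi (0:ℝ), F t
        = ∫ x in Ioi (0:ℝ), 2 * F x := (integral_const_mul 2 F).symm
      _ = ∫ x in Ioi (0:ℝ), ((y:ℂ)^a * ((|y| : ℝ) : ℂ)^(-s) * ((|y| : ℝ) : ℂ)) *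
            ((|(2:ℝ)| * x ^ ((2:ℝ)-1)) • g (|y| * x ^ (2:ℝ))) :=
          (setIntegral_congr_fun measurableSet_Ioi c3).symm
      _ = ((y:ℂ)^a * ((|y| : ℝ) : ℂ)^(-s) * ((|y| : ℝ) : ℂ)) *
            ∫ x in Ioi (0:ℝ), (|(2:ℝ)| * x ^ ((2:ℝ)-1)) • g (|y| * x ^ (2:ℝ)) :=
          integral_const_mul _ _
      _ = ((y:ℂ)^a * ((|y| : ℝ) : ℂ)^(-s) * ((|y| : ℝ) : ℂ)) *
            (|y|⁻¹ • ∫ u in Ioi (0:ℝ), g u) := by rw [c2, c1]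
      _ = 2 * (y : ℂ) ^ a * (↑|y| : ℂ) ^ (-s₀ - ((a : ℂ) - (b : ℂ)) / 2) *
            besselK s (2 * Real.pi * |y|) := by
          rw [hbK, Complex.real_smul, Complex.ofReal_inv,
            show -s₀ - ((a : ℂ) - (b : ℂ)) / 2 = -s by rw [hs]; ring]
          field_simp
end
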